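/- arXiv:1307.1857 — 3 statements merged into one kernel-verified Lean document; each statement's English description precedes it below -/
import Mathlib

section
/- Let n ≥ 1 be an integer, let g : (0,∞) → (0,∞) be measurable with s^{n−1} g(s) integrable on (0,∞), and set G(λ) = (2π^{n/2}/Γ(n/2)) ∫_0^λ s^{n−1} g(s) ds. Let α, β be reals with β ≤ α < n. If the function r ↦ g(1/r) belongs to OR(β,α), then the function r ↦ G(1/r) belongs to OR(β−n, α−n) and G(1/r) ≍ g(1/r)/r^n as r → ∞. -/
open MeasureTheory Filter Real Set Asymptotics

/-- `L ∈ OR(β,α)`: O-regular variation at infinity with Matuszewska indices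
between `β` and `α`. -/
def MemOR (L : ℝ → ℝ) (β α : ℝ) : Prop :=
  ∀ δ : ℝ, 0 < δ → ∃ C : ℝ, 0 < C ∧ ∃ D : ℝ, 0 < D ∧ ∃ lam₀ : ℝ, 0 < lam₀ ∧
    ∀ t : ℝ, 1 ≤ t → ∀ lam : ℝ, lam₀ ≤ lam →
      D * t ^ (β - δ) ≤ L (lam * t) / L lam ∧ L (lam * t) / L lam ≤ C * t ^ (α + δ)

open intervalIntegral in
theorem or_density_to_distribution (n : ℕ) (hn : 1 ≤ n)
    (g : ℝ → ℝ) (hgpos : ∀ s : ℝ, 0 < s → 0 < g s) (hgmeas : Measurable g)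
    (hgint : IntegrableOn (fun s => s ^ (n - 1) * g s) (Set.Ioi (0 : ℝ)))
    (G : ℝ → ℝ)
    (hG : ∀ lam : ℝ, G lam = 2 * π ^ ((n : ℝ) / 2) / Real.Gamma ((n : ℝ) / 2) *
      ∫ s in Set.Ioc (0 : ℝ) lam, s ^ (n - 1) * g s)
    (α β : ℝ) (hβα : β ≤ α) (hα : α < n)
    (hg : MemOR (fun r => g (1 / r)) β α) :
    MemOR (fun r => G (1 / r)) (β - n) (α - n) ∧
      ((fun r => G (1 / r)) =O[atTop] fun r => g (1 / r) / r ^ (n : ℝ)) ∧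
      ((fun r => g (1 / r) / r ^ (n : ℝ)) =O[atTop] fun r => G (1 / r)) := by
  have hπ : (0:ℝ) < π := Real.pi_pos
  have hΓ : 0 < Real.Gamma ((n : ℝ) / 2) := by
    apply Real.Gamma_pos_of_pos
    have : (0:ℝ) < (n:ℝ) := by exact_mod_cast hn
    linarith
  set c : ℝ := 2 * π ^ ((n : ℝ) / 2) / Real.Gamma ((n : ℝ) / 2) with hcdef
  have hcpos : 0 < c := by
    apply div_pos _ hΓ
    have := Real.rpow_pos_of_pos hπ ((n : ℝ) / 2)
    linarith
  set δ₀ : ℝ := ((n : ℝ) - α) / 2 with hδ₀def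
  have hδ₀ : 0 < δ₀ := by rw [hδ₀def]; linarith
  have hαδ : α + δ₀ < n := by rw [hδ₀def]; linarith
  obtain ⟨C, hC, D, hD, lam₀, hlam₀, hCD⟩ := hg δ₀ hδ₀
  -- translation of the OR hypothesis to small arguments
  have hgkey : ∀ μ s : ℝ, 0 < s → s ≤ μ → lam₀ ≤ 1/μ →
      D * (μ/s) ^ (β - δ₀) * g μ ≤ g s ∧ g s ≤ C * (μ/s) ^ (α + δ₀) * g μ := by
    intro μ s hs hsμ hμlam
    have hμ : 0 < μ := lt_of_lt_of_le hs hsμ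
    have ht : 1 ≤ μ / s := (one_le_div hs).2 hsμ
    obtain ⟨h1, h2⟩ := hCD (μ/s) ht (1/μ) hμlam
    simp only at h1 h2
    have he : 1 / (1/μ * (μ/s)) = s := by
      field_simp
    have he2 : 1 / ((1:ℝ)/μ) = μ := one_div_one_div μ
    rw [he, he2] at h1 h2
    have hgμ : 0 < g μ := hgpos μ hμ
    constructor
    · calc D * (μ/s) ^ (β - δ₀) * g μ ≤ g s / g μ * g μ :=
            mul_le_mul_of_nonneg_right h1 hgμ.le
        _ = g s := div_mul_cancel₀ _ hgμ.ne'
    · calc g s = g s / g μ * g μ := (div_mul_cancel₀ _ hgμ.ne').symm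
        _ ≤ C * (μ/s) ^ (α + δ₀) * g μ := mul_le_mul_of_nonneg_right h2 hgμ.le
  have hint : ∀ μ : ℝ, IntegrableOn (fun s => s ^ (n-1) * g s) (Set.Ioc 0 μ) :=
    fun μ => hgint.mono_set (fun x hx => hx.1)
  set p : ℝ := (n:ℝ) - 1 - (α + δ₀) with hpdef
  have hp : -1 < p := by rw [hpdef]; linarith
  have hp1 : 0 < p + 1 := by linarith
  have hcast : ∀ s : ℝ, (s:ℝ) ^ ((n:ℝ) - 1) = s ^ (n-1) := by
    intro s
    rw [← Real.rpow_natCast s (n-1)]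
    congr 1
    push_cast [Nat.cast_sub hn]
    ring
  set K₁ : ℝ := c * C / (p+1) with hK₁def
  have hK₁ : 0 < K₁ := div_pos (mul_pos hcpos hC) hp1
  -- Upper bound for G
  have hA : ∀ μ : ℝ, 0 < μ → lam₀ ≤ 1/μ → G μ ≤ K₁ * μ^n * g μ := by
    intro μ hμ hμl
    have hgμ : 0 < g μ := hgpos μ hμ
    have hpt : ∀ s ∈ Set.Ioc (0:ℝ) μ, s ^ (n-1) * g s ≤ (C * g μ * μ ^ (α+δ₀)) * s ^ p := by
      intro s hs
      have hs0 : 0 < s := hs.1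
      have h2 := (hgkey μ s hs0 hs.2 hμl).2
      have hstep : s ^ (n-1) * g s ≤ s ^ (n-1) * (C * (μ/s) ^ (α+δ₀) * g μ) :=
        mul_le_mul_of_nonneg_left h2 (by positivity)
      refine hstep.trans_eq ?_
      have hsplit : s ^ p = s ^ ((n:ℝ)-1) * (s ^ (α+δ₀))⁻¹ := by
        rw [show p = ((n:ℝ)-1) + (-(α+δ₀)) by rw [hpdef]; ring, Real.rpow_add hs0,
          Real.rpow_neg hs0.le]
      rw [Real.div_rpow hμ.le hs0.le, hsplit, hcast s, div_eq_mul_inv]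
      ring
    have hintp : IntegrableOn (fun s : ℝ => (C * g μ * μ ^ (α+δ₀)) * s ^ p) (Set.Ioc 0 μ) := by
      have h := intervalIntegrable_rpow' (a := 0) (b := μ) hp
      rw [intervalIntegrable_iff_integrableOn_Ioc_of_le hμ.le] at h
      exact h.const_mul _
    have hscalc : (∫ s in Set.Ioc (0:ℝ) μ, s ^ p) = μ ^ (p+1) / (p+1) := by
      rw [← intervalIntegral.integral_of_le hμ.le,
        integral_rpow (Or.inl hp), Real.zero_rpow hp1.ne']
      ring
    have hmono := setIntegral_mono_on (hint μ) hintp measurableSet_Ioc hpt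
    rw [MeasureTheory.integral_const_mul, hscalc] at hmono
    rw [hG μ]
    have hμn : μ ^ (α+δ₀) * μ ^ (p+1) = μ ^ n := by
      rw [← Real.rpow_add hμ, show α+δ₀+(p+1) = (n:ℝ) by rw [hpdef]; ring,
        Real.rpow_natCast]
    calc c * ∫ s in Set.Ioc (0:ℝ) μ, s^(n-1) * g s
        ≤ c * (C * g μ * μ ^ (α+δ₀) * (μ ^ (p+1) / (p+1))) :=
          mul_le_mul_of_nonneg_left hmono hcpos.le
      _ = K₁ * μ^n * g μ := by
          rw [hK₁def, ← hμn]
          field_simp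
  -- Lower bound for G
  set E : ℝ := min ((2:ℝ) ^ (β - δ₀)) 1 with hEdef
  have hE : 0 < E := lt_min (Real.rpow_pos_of_pos two_pos _) one_pos
  have hEle : ∀ t : ℝ, 1 ≤ t → t ≤ 2 → E ≤ t ^ (β - δ₀) := by
    intro t h1 h2
    rcases le_or_gt (β - δ₀) 0 with h | h
    · calc E ≤ (2:ℝ) ^ (β - δ₀) := min_le_left _ _
        _ ≤ t ^ (β - δ₀) := Real.rpow_le_rpow_of_nonpos (by linarith) h2 h
    · calc E ≤ 1 := min_le_right _ _
        _ = (1:ℝ) ^ (β - δ₀) := (Real.one_rpow _).symm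
        _ ≤ t ^ (β - δ₀) := Real.rpow_le_rpow (by norm_num) h1 h.le
  set K₂ : ℝ := c * (D * E) / 2^n with hK₂def
  have hK₂ : 0 < K₂ := div_pos (mul_pos hcpos (mul_pos hD hE)) (by positivity)
  have hB : ∀ μ : ℝ, 0 < μ → lam₀ ≤ 1/μ → K₂ * μ^n * g μ ≤ G μ := by
    intro μ hμ hμl
    have hgμ : 0 < g μ := hgpos μ hμ
    have hsub : Set.Ioc (μ/2) μ ⊆ Set.Ioc 0 μ := Set.Ioc_subset_Ioc (by linarith) le_rfl
    have hlow : ∀ s ∈ Set.Ioc (μ/2) μ, (μ/2)^(n-1) * (D * E * g μ) ≤ s^(n-1) * g s := by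
      intro s hs
      have hs0 : 0 < s := lt_of_le_of_lt (by linarith) hs.1
      have h1 := (hgkey μ s hs0 hs.2 hμl).1
      have ht2 : μ / s ≤ 2 := by
        rw [div_le_iff₀ hs0]; linarith [hs.1]
      have ht1 : 1 ≤ μ / s := (one_le_div hs0).2 hs.2
      have hE' := hEle _ ht1 ht2
      have hgs : D * E * g μ ≤ g s := by
        refine le_trans ?_ h1
        have h3 : D * E ≤ D * (μ/s) ^ (β - δ₀) := mul_le_mul_of_nonneg_left hE' hD.le
        exact mul_le_mul_of_nonneg_right h3 hgμ.le
      have hsn : (μ/2)^(n-1) ≤ s^(n-1) := pow_le_pow_left₀ (by linarith) hs.1.le _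
      exact mul_le_mul hsn hgs (mul_nonneg (mul_nonneg hD.le hE.le) hgμ.le)
        (pow_nonneg hs0.le _)
    have hconst := setIntegral_ge_of_const_le measurableSet_Ioc
      (by rw [Real.volume_Ioc]; exact ENNReal.ofReal_ne_top)
      hlow (hgint.mono_set (fun x hx => (hsub hx).1))
    rw [Real.volume_real_Ioc_of_le (by linarith), smul_eq_mul, mul_comm (μ - μ/2)] at hconst
    have hmono : (∫ s in Set.Ioc (μ/2) μ, s^(n-1)*g s) ≤ ∫ s in Set.Ioc (0:ℝ) μ, s^(n-1)*g s := by
      refine setIntegral_mono_set (hint μ) ?_ (HasSubset.Subset.eventuallyLE hsub)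
      filter_upwards [ae_restrict_mem measurableSet_Ioc] with x hx
      have hx0 : 0 < x := hx.1
      exact mul_nonneg (pow_nonneg hx0.le _) (hgpos x hx0).le
    have hpow : c * ((μ/2)^(n-1) * (D*E*g μ) * (μ - μ/2)) = K₂ * μ^n * g μ := by
      have hμ2 : μ - μ/2 = μ/2 := by ring
      rw [hμ2, show (μ/2)^(n-1) * (D*E*g μ) * (μ/2) = (μ/2)^(n-1) * (μ/2)^1 * (D*E*g μ) by ring,
        ← pow_add, Nat.sub_add_cancel hn, div_pow, hK₂def]
      field_simp
    rw [hG μ]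
    calc K₂ * μ^n * g μ = c * ((μ/2)^(n-1) * (D*E*g μ) * (μ - μ/2)) := hpow.symm
      _ ≤ c * ∫ s in Set.Ioc (0:ℝ) μ, s^(n-1) * g s :=
          mul_le_mul_of_nonneg_left (hconst.trans hmono) hcpos.le
  have hGpos : ∀ μ : ℝ, 0 < μ → lam₀ ≤ 1/μ → 0 < G μ := by
    intro μ hμ hμl
    have h := hB μ hμ hμl
    have hgμ := hgpos μ hμ
    have h0 : 0 < K₂ * μ^n * g μ := mul_pos (mul_pos hK₂ (pow_pos hμ n)) hgμ
    linarith
  refine ⟨?_, ?_, ?_⟩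
  · -- MemOR for G(1/r)
    intro δ hδ
    obtain ⟨C', hC', D', hD', lam₁, hlam₁, hCD'⟩ := hg δ hδ
    refine ⟨K₁ * C' / K₂, div_pos (mul_pos hK₁ hC') hK₂,
      K₂ * D' / K₁, div_pos (mul_pos hK₂ hD') hK₁, max lam₀ lam₁,
      lt_max_of_lt_left hlam₀, ?_⟩
    intro t ht lam hlam
    have hlam0 : lam₀ ≤ lam := le_trans (le_max_left _ _) hlam
    have hlam1 : lam₁ ≤ lam := le_trans (le_max_right _ _) hlam
    have hlampos : 0 < lam := lt_of_lt_of_le hlam₀ hlam0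
    have htpos : 0 < t := lt_of_lt_of_le one_pos ht
    have hlt : 0 < lam * t := mul_pos hlampos htpos
    have hlam0' : lam₀ ≤ lam * t := le_trans hlam0 (le_mul_of_one_le_right hlampos.le ht)
    have hu : 0 < 1/(lam*t) := by positivity
    have hv : 0 < 1/lam := by positivity
    have hul : lam₀ ≤ 1/(1/(lam*t)) := by rw [one_div_one_div]; exact hlam0'
    have hvl : lam₀ ≤ 1/(1/lam) := by rw [one_div_one_div]; exact hlam0
    obtain ⟨hg1, hg2⟩ := hCD' t ht lam hlam1
    simp only at hg1 hg2
    have hb := hGpos _ hv hvl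
    have hAu := hA _ hu hul
    have hBu := hB _ hu hul
    have hAv := hA _ hv hvl
    have hBv := hB _ hv hvl
    have hgv : 0 < g (1/lam) := hgpos _ hv
    have hgu : 0 < g (1/(lam*t)) := hgpos _ hu
    have hTn : (0:ℝ) < t^n := pow_pos htpos n
    have hupow : (1/(lam*t))^n = (1/lam)^n / t^n := by
      rw [← div_pow, div_div]
    have hg2' : g (1/(lam*t)) ≤ C' * t^(α+δ) * g (1/lam) := by
      rw [div_le_iff₀ hgv] at hg2; exact hg2
    have hg1' : D' * t^(β-δ) * g (1/lam) ≤ g (1/(lam*t)) := by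
      rw [le_div_iff₀ hgv] at hg1; exact hg1
    simp only
    constructor
    · rw [le_div_iff₀ hb]
      have htsplit : t ^ (β - (n:ℝ) - δ) = t^(β-δ) / t^n := by
        rw [eq_div_iff hTn.ne', ← Real.rpow_natCast t n, ← Real.rpow_add htpos]
        congr 1; ring
      calc K₂*D'/K₁ * t^(β - (n:ℝ) - δ) * G (1/lam)
          ≤ K₂*D'/K₁ * t^(β - (n:ℝ) - δ) * (K₁ * (1/lam)^n * g (1/lam)) := by
            refine mul_le_mul_of_nonneg_left hAv ?_
            exact mul_nonneg (div_pos (mul_pos hK₂ hD') hK₁).le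
              (Real.rpow_nonneg htpos.le _)
        _ = K₂ * (1/(lam*t))^n * (D' * t^(β-δ) * g (1/lam)) := by
            rw [htsplit, hupow]
            field_simp
        _ ≤ K₂ * (1/(lam*t))^n * g (1/(lam*t)) := by
            refine mul_le_mul_of_nonneg_left hg1' ?_
            exact mul_nonneg hK₂.le (pow_nonneg hu.le _)
        _ ≤ G (1/(lam*t)) := hBu
    · rw [div_le_iff₀ hb]
      have htsplit : t ^ (α - (n:ℝ) + δ) = t^(α+δ) / t^n := by
        rw [eq_div_iff hTn.ne', ← Real.rpow_natCast t n, ← Real.rpow_add htpos]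
        congr 1; ring
      calc G (1/(lam*t)) ≤ K₁ * (1/(lam*t))^n * g (1/(lam*t)) := hAu
        _ ≤ K₁ * (1/(lam*t))^n * (C' * t^(α+δ) * g (1/lam)) := by
            refine mul_le_mul_of_nonneg_left hg2' ?_
            exact mul_nonneg hK₁.le (pow_nonneg hu.le _)
        _ = K₁*C'/K₂ * t^(α - (n:ℝ) + δ) * (K₂ * (1/lam)^n * g (1/lam)) := by
            rw [htsplit, hupow]
            field_simp
        _ ≤ K₁*C'/K₂ * t^(α - (n:ℝ) + δ) * G (1/lam) := by
            refine mul_le_mul_of_nonneg_left hBv ?_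
            exact mul_nonneg (div_pos (mul_pos hK₁ hC') hK₂).le
              (Real.rpow_nonneg htpos.le _)
  · rw [isBigO_iff]
    refine ⟨K₁, ?_⟩
    filter_upwards [eventually_ge_atTop (max lam₀ 1)] with r hr
    have hr1 : (1:ℝ) ≤ r := le_trans (le_max_right _ _) hr
    have hr0 : 0 < r := lt_of_lt_of_le one_pos hr1
    have hrl : lam₀ ≤ r := le_trans (le_max_left _ _) hr
    have hu : 0 < 1/r := by positivity
    have hul : lam₀ ≤ 1/(1/r) := by rw [one_div_one_div]; exact hrl
    have h1 := hA _ hu hul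
    have h2 := hGpos _ hu hul
    have hgu := hgpos _ hu
    have hrn : (0:ℝ) < r ^ ((n:ℝ)) := Real.rpow_pos_of_pos hr0 _
    rw [Real.norm_eq_abs, Real.norm_eq_abs, abs_of_pos h2, abs_of_pos (div_pos hgu hrn)]
    calc G (1/r) ≤ K₁ * (1/r)^n * g (1/r) := h1
      _ = K₁ * (g (1/r) / r ^ ((n:ℝ))) := by
          rw [Real.rpow_natCast, div_pow, one_pow]
          ring
  · rw [isBigO_iff]
    refine ⟨1/K₂, ?_⟩
    filter_upwards [eventually_ge_atTop (max lam₀ 1)] with r hr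
    have hr1 : (1:ℝ) ≤ r := le_trans (le_max_right _ _) hr
    have hr0 : 0 < r := lt_of_lt_of_le one_pos hr1
    have hrl : lam₀ ≤ r := le_trans (le_max_left _ _) hr
    have hu : 0 < 1/r := by positivity
    have hul : lam₀ ≤ 1/(1/r) := by rw [one_div_one_div]; exact hrl
    have h1 := hB _ hu hul
    have h2 := hGpos _ hu hul
    have hgu := hgpos _ hu
    have hrn : (0:ℝ) < r ^ ((n:ℝ)) := Real.rpow_pos_of_pos hr0 _
    rw [Real.norm_eq_abs, Real.norm_eq_abs, abs_of_pos (div_pos hgu hrn), abs_of_pos h2]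
    have h1' : K₂ * (g (1/r) / r ^ ((n:ℝ))) ≤ G (1/r) := by
      calc K₂ * (g (1/r) / r ^ ((n:ℝ))) = K₂ * (1/r)^n * g (1/r) := by
            rw [Real.rpow_natCast, div_pow, one_pow]
            ring
        _ ≤ G (1/r) := h1
    calc g (1/r) / r ^ ((n:ℝ))
        ≤ G (1/r) / K₂ := (le_div_iff₀' hK₂).2 h1'
      _ = 1/K₂ * G (1/r) := by
          rw [div_eq_mul_inv, mul_comm, inv_eq_one_div]
end

section
/- Let n ≥ 1 be an integer, let g : (0,∞) → [0,∞) be measurable with s^{n−1} g(s) integrable on (0,∞), and set G(λ) = (2π^{n/2}/Γ(n/2)) ∫_0^λ s^{n−1} g(s) ds. Assume g is essentially positive, i.e. there exists ε > 0 with g(x) > 0 for all x ∈ (0, ε], and assume that r ↦ g(1/r) belongs to OR(β′,α′) for some reals β′ ≤ α′. Let α, β be reals with β ≤ α < 0. If the function r ↦ G(1/r) belongs to OR(β,α), then the function r ↦ g(1/r) belongs to OR(β+n, α+n) and G(1/r) ≍ g(1/r)/r^n as r → ∞. -/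
open MeasureTheory Filter Real Set Asymptotics

lemma aux_rpow_upper {t K x : ℝ} (ht : 1 ≤ t) (htK : t ≤ K) : t ^ x ≤ K ^ |x| := by
  rcases le_or_gt 0 x with hx | hx
  · rw [abs_of_nonneg hx]
    exact Real.rpow_le_rpow (by linarith) htK hx
  · calc t ^ x ≤ 1 := Real.rpow_le_one_of_one_le_of_nonpos ht hx.le
    _ ≤ K ^ |x| := Real.one_le_rpow (by linarith) (abs_nonneg x)

lemma aux_rpow_lower {t K x : ℝ} (ht : 1 ≤ t) (htK : t ≤ K) : K ^ (-|x|) ≤ t ^ x := by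
  calc K ^ (-|x|) ≤ t ^ (-|x|) :=
        Real.rpow_le_rpow_of_nonpos (by linarith) htK (neg_nonpos.2 (abs_nonneg x))
    _ ≤ t ^ x := Real.rpow_le_rpow_of_exponent_le ht (neg_abs_le x)

theorem or_distribution_to_density (n : ℕ) (hn : 1 ≤ n)
    (g : ℝ → ℝ) (hg0 : ∀ s : ℝ, 0 ≤ g s) (hgmeas : Measurable g)
    (hgint : IntegrableOn (fun s => s ^ (n - 1) * g s) (Set.Ioi (0 : ℝ)))
    (G : ℝ → ℝ)
    (hG : ∀ lam : ℝ, G lam = 2 * π ^ ((n : ℝ) / 2) / Real.Gamma ((n : ℝ) / 2) *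
      ∫ s in Set.Ioc (0 : ℝ) lam, s ^ (n - 1) * g s)
    (ε : ℝ) (hε : 0 < ε) (hgpos : ∀ x ∈ Set.Ioc (0 : ℝ) ε, 0 < g x)
    (β' α' : ℝ) (hβ'α' : β' ≤ α') (hgOR : MemOR (fun r => g (1 / r)) β' α')
    (α β : ℝ) (hβα : β ≤ α) (hα : α < 0)
    (hGOR : MemOR (fun r => G (1 / r)) β α) :
    MemOR (fun r => g (1 / r)) (β + n) (α + n) ∧
      ((fun r => G (1 / r)) =O[atTop] fun r => g (1 / r) / r ^ (n : ℝ)) ∧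
      ((fun r => g (1 / r) / r ^ (n : ℝ)) =O[atTop] fun r => G (1 / r)) := by
  obtain ⟨k, rfl⟩ : ∃ k, n = k + 1 := ⟨n - 1, (Nat.succ_pred_eq_of_pos hn).symm⟩
  simp only [Nat.add_sub_cancel] at hgint hG
  set c : ℝ := 2 * π ^ (((k+1 : ℕ) : ℝ) / 2) / Real.Gamma (((k+1 : ℕ) : ℝ) / 2) with hc_def
  have hc : 0 < c := by
    apply div_pos
    · positivity
    · apply Real.Gamma_pos_of_pos; positivity
  set f : ℝ → ℝ := fun s => s ^ k * g s with hf_def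
  have hfnonneg : ∀ s : ℝ, 0 < s → 0 ≤ f s := by
    intro s hs
    exact mul_nonneg (pow_nonneg hs.le _) (hg0 s)
  have hfint : ∀ a b : ℝ, 0 ≤ a → IntegrableOn f (Set.Ioc a b) := by
    intro a b ha
    exact hgint.mono_set (fun x hx => lt_of_le_of_lt ha hx.1)
  have hsplit : ∀ a b : ℝ, 0 ≤ a → a ≤ b → G b = G a + c * ∫ s in Set.Ioc a b, f s := by
    intro a b ha hab
    rw [hG b, hG a]
    have hU : Set.Ioc (0:ℝ) a ∪ Set.Ioc a b = Set.Ioc (0:ℝ) b :=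
      Set.Ioc_union_Ioc_eq_Ioc ha hab
    have hdisj : Disjoint (Set.Ioc (0:ℝ) a) (Set.Ioc a b) := by
      apply Set.Ioc_disjoint_Ioc_of_le le_rfl
    rw [← hU, setIntegral_union hdisj measurableSet_Ioc (hfint 0 a le_rfl) (hfint a b ha)]
    ring
  have hGpos : ∀ l : ℝ, 0 < l → 0 < G l := by
    intro l hl
    rw [hG l]
    apply mul_pos hc
    rw [setIntegral_pos_iff_support_of_nonneg_ae ?_ (hfint 0 l le_rfl)]
    · refine lt_of_lt_of_le ?_ (measure_mono (?_ : Set.Ioc 0 (min l ε) ⊆ _))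
      · rw [Real.volume_Ioc]
        simp only [ENNReal.ofReal_pos, sub_zero, lt_min_iff]
        exact ⟨hl, hε⟩
      · intro x hx
        have hx0 : 0 < x := hx.1
        have hxε : x ≤ ε := le_trans hx.2 (min_le_right _ _)
        have hxl : x ≤ l := le_trans hx.2 (min_le_left _ _)
        refine ⟨?_, hx0, hxl⟩
        have : 0 < f x := mul_pos (pow_pos hx0 _) (hgpos x ⟨hx0, hxε⟩)
        exact Function.mem_support.2 (ne_of_gt this)
    · filter_upwards [ae_restrict_mem measurableSet_Ioc] with x hx
      exact hfnonneg x hx.1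
  -- the sandwich
  obtain ⟨c1, hc1, c2, hc2, r₀, hr₀1, hr₀ε, hsand⟩ :
      ∃ c1 : ℝ, 0 < c1 ∧ ∃ c2 : ℝ, 0 < c2 ∧ ∃ r₀ : ℝ, 1 ≤ r₀ ∧ 1/ε ≤ r₀ ∧
        ∀ r : ℝ, r₀ ≤ r → c1 * ((1/r)^(k+1) * g (1/r)) ≤ G (1/r) ∧
          G (1/r) ≤ c2 * ((1/r)^(k+1) * g (1/r)) := by
    obtain ⟨Cg, hCg, Dg, hDg, Lg, hLg, hbg⟩ := hgOR 1 one_pos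
    obtain ⟨CG, hCG, DG, hDG, LG, hLG, hbG⟩ := hGOR (-α/2) (by linarith)
    set K : ℝ := max 2 ((2*CG) ^ (2 / (-α))) with hK_def
    have hK2 : (2:ℝ) ≤ K := le_max_left _ _
    have hK1 : (1:ℝ) ≤ K := by linarith
    have hK0 : (0:ℝ) < K := by linarith
    have hKbound : CG * K ^ (α + -α/2) ≤ 1/2 := by
      have h2CG : (0:ℝ) < 2*CG := by linarith
      have hKge : (2*CG) ^ (2 / (-α)) ≤ K := le_max_right _ _
      have hbase : (0:ℝ) < (2*CG) ^ (2 / (-α)) := Real.rpow_pos_of_pos h2CG _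
      have h1 : K ^ (α + -α/2) ≤ ((2*CG) ^ (2/(-α))) ^ (α + -α/2) :=
        Real.rpow_le_rpow_of_nonpos hbase hKge (by linarith)
      have h2 : ((2*CG) ^ (2/(-α))) ^ (α + -α/2) = (2*CG)⁻¹ := by
        rw [← Real.rpow_mul h2CG.le]
        have he : 2/(-α) * (α + -α/2) = -1 := by
          field_simp
          rw [show (2:ℝ) + -1 = 1 by norm_num, mul_one, div_self hα.ne]
        rw [he, Real.rpow_neg_one]
      calc CG * K^(α + -α/2) ≤ CG * (2*CG)⁻¹ :=
            mul_le_mul_of_nonneg_left (le_trans h1 h2.le) hCG.le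
        _ = 1/2 := by
            field_simp
    set M : ℝ := Cg * K ^ |α' + 1| with hM_def
    have hM0 : 0 < M := mul_pos hCg (Real.rpow_pos_of_pos hK0 _)
    set m : ℝ := Dg * 2 ^ (-|β' - 1|) with hm_def
    have hm0 : 0 < m := mul_pos hDg (Real.rpow_pos_of_pos two_pos _)
    refine ⟨c * m / 2^(k+1), by positivity, 2*c*M, by positivity,
      max (max Lg LG) (max (1/ε) 1), le_trans (le_max_right _ _) (le_max_right _ _),
      le_trans (le_max_left _ _) (le_max_right _ _), ?_⟩
    intro r hr
    have hr1 : (1:ℝ) ≤ r := le_trans (le_trans (le_max_right _ _) (le_max_right _ _)) hr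
    have hrε : 1/ε ≤ r := le_trans (le_trans (le_max_left _ _) (le_max_right _ _)) hr
    have hrLg : Lg ≤ r := le_trans (le_trans (le_max_left _ _) (le_max_left _ _)) hr
    have hrLG : LG ≤ r := le_trans (le_trans (le_max_right _ _) (le_max_left _ _)) hr
    have hr0 : (0:ℝ) < r := by linarith
    have hl0 : (0:ℝ) < 1/r := by positivity
    have hlε : 1/r ≤ ε := by
      rw [div_le_iff₀ hr0]
      calc (1:ℝ) = ε * (1/ε) := by field_simp
        _ ≤ ε * r := mul_le_mul_of_nonneg_left hrε hε.le
    have hgl : 0 < g (1/r) := hgpos _ ⟨hl0, hlε⟩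
    have hptU : ∀ s ∈ Set.Ioc ((1/r)/K) (1/r), f s ≤ (1/r)^k * (M * g (1/r)) := by
      intro s hs
      have hs0 : 0 < s := lt_trans (by positivity) hs.1
      have ht1 : 1 ≤ (1/r)/s := (le_div_iff₀ hs0).mpr (by linarith [hs.2])
      have htK : (1/r)/s ≤ K := by
        have h1 := (div_lt_iff₀ hK0).mp hs.1
        exact (div_le_iff₀ hs0).mpr (by linarith)
      have harg : r * ((1/r)/s) = 1/s := by field_simp
      have hb := (hbg ((1/r)/s) ht1 r hrLg).2
      simp only at hb
      rw [harg, one_div_one_div] at hb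
      have hgs : g s ≤ M * g (1/r) := by
        have h2 : Cg * ((1/r)/s)^(α'+1) ≤ M :=
          mul_le_mul_of_nonneg_left (aux_rpow_upper ht1 htK) hCg.le
        exact (div_le_iff₀ hgl).mp (le_trans hb h2)
      calc f s = s^k * g s := rfl
        _ ≤ (1/r)^k * (M * g (1/r)) :=
            mul_le_mul (pow_le_pow_left₀ hs0.le hs.2 k) hgs (hg0 s) (by positivity)
    have hptL : ∀ s ∈ Set.Ioc ((1/r)/2) (1/r), ((1/r)/2)^k * (m * g (1/r)) ≤ f s := by
      intro s hs
      have hs0 : 0 < s := lt_trans (by positivity) hs.1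
      have ht1 : 1 ≤ (1/r)/s := (le_div_iff₀ hs0).mpr (by linarith [hs.2])
      have ht2 : (1/r)/s ≤ 2 := by
        have h1 := (div_lt_iff₀ two_pos).mp hs.1
        exact (div_le_iff₀ hs0).mpr (by linarith)
      have harg : r * ((1/r)/s) = 1/s := by field_simp
      have hb := (hbg ((1/r)/s) ht1 r hrLg).1
      simp only at hb
      rw [harg, one_div_one_div] at hb
      have hgs : m * g (1/r) ≤ g s := by
        have h2 : m ≤ Dg * ((1/r)/s)^(β'-1) :=
          mul_le_mul_of_nonneg_left (aux_rpow_lower ht1 ht2) hDg.le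
        exact (le_div_iff₀ hgl).mp (le_trans h2 hb)
      calc ((1/r)/2)^k * (m * g (1/r)) ≤ s^k * g s :=
            mul_le_mul (pow_le_pow_left₀ (by positivity) hs.1.le k) hgs
              (by positivity) (by positivity)
        _ = f s := rfl
    have hKsub : (1/r)/K ≤ 1/r := div_le_self hl0.le hK1
    have h2sub : (1/r)/2 ≤ 1/r := div_le_self hl0.le one_le_two
    have hIU : ∫ s in Set.Ioc ((1/r)/K) (1/r), f s ≤ (1/r)^(k+1) * (M * g (1/r)) := by
      have hconst : IntegrableOn (fun _ : ℝ => (1/r)^k * (M * g (1/r)))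
          (Set.Ioc ((1/r)/K) (1/r)) := by
        refine integrableOn_const measure_Ioc_lt_top.ne
      calc ∫ s in Set.Ioc ((1/r)/K) (1/r), f s
          ≤ ∫ _s in Set.Ioc ((1/r)/K) (1/r), (1/r)^k * (M * g (1/r)) :=
            setIntegral_mono_on (hfint _ _ (by positivity)) hconst measurableSet_Ioc hptU
        _ = (volume (Set.Ioc ((1/r)/K) (1/r))).toReal * ((1/r)^k * (M * g (1/r))) := by
            rw [setIntegral_const]; rfl
        _ ≤ (1/r) * ((1/r)^k * (M * g (1/r))) := by
            refine mul_le_mul_of_nonneg_right ?_ (by positivity)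
            rw [Real.volume_Ioc, ENNReal.toReal_ofReal (by linarith)]
            have : (0:ℝ) ≤ (1/r)/K := by positivity
            linarith
        _ = (1/r)^(k+1) * (M * g (1/r)) := by ring
    have hIL : ((1/r)/2)^(k+1) * (m * g (1/r)) ≤ ∫ s in Set.Ioc ((1/r)/2) (1/r), f s := by
      have hconst : IntegrableOn (fun _ : ℝ => ((1/r)/2)^k * (m * g (1/r)))
          (Set.Ioc ((1/r)/2) (1/r)) := by
        refine integrableOn_const measure_Ioc_lt_top.ne
      calc ((1/r)/2)^(k+1) * (m * g (1/r))
          = (volume (Set.Ioc ((1/r)/2) (1/r))).toReal * (((1/r)/2)^k * (m * g (1/r))) := by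
            rw [Real.volume_Ioc, ENNReal.toReal_ofReal (by linarith)]
            ring
        _ = ∫ _s in Set.Ioc ((1/r)/2) (1/r), ((1/r)/2)^k * (m * g (1/r)) := by
            rw [setIntegral_const]; rfl
        _ ≤ ∫ s in Set.Ioc ((1/r)/2) (1/r), f s :=
            setIntegral_mono_on hconst (hfint _ _ (by positivity)) measurableSet_Ioc hptL
    constructor
    · have hgeq := hsplit ((1/r)/2) (1/r) (by positivity) h2sub
      have hG2 : 0 < G ((1/r)/2) := hGpos _ (by positivity)
      have hmul : c * (((1/r)/2)^(k+1) * (m * g (1/r))) ≤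
          c * ∫ s in Set.Ioc ((1/r)/2) (1/r), f s :=
        mul_le_mul_of_nonneg_left hIL hc.le
      have hfinal : c * (((1/r)/2)^(k+1) * (m * g (1/r))) ≤ G (1/r) := by linarith
      calc c * m / 2^(k+1) * ((1/r)^(k+1) * g (1/r))
          = c * (((1/r)/2)^(k+1) * (m * g (1/r))) := by
            rw [div_pow, div_pow]; ring
        _ ≤ G (1/r) := hfinal
    · have hgeq := hsplit ((1/r)/K) (1/r) (by positivity) hKsub
      have hb := (hbG K hK1 r hrLG).2
      simp only at hb
      rw [← div_div] at hb
      have hGl : 0 < G (1/r) := hGpos _ hl0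
      have hGK : G ((1/r)/K) ≤ G (1/r) / 2 := by
        have h3 := (div_le_iff₀ hGl).mp (le_trans hb hKbound)
        linarith
      have hIc : c * ∫ s in Set.Ioc ((1/r)/K) (1/r), f s ≤
          c * ((1/r)^(k+1) * (M * g (1/r))) :=
        mul_le_mul_of_nonneg_left hIU hc.le
      calc G (1/r) ≤ 2 * (c * ((1/r)^(k+1) * (M * g (1/r)))) := by linarith
        _ = 2*c*M * ((1/r)^(k+1) * g (1/r)) := by ring
  have hgposr : ∀ r : ℝ, r₀ ≤ r → 0 < g (1/r) := by
    intro r hr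
    have hr0 : 0 < r := lt_of_lt_of_le (by linarith) hr
    refine hgpos _ ⟨by positivity, ?_⟩
    rw [div_le_iff₀ hr0]
    calc (1:ℝ) = ε * (1/ε) := by field_simp
    _ ≤ ε * r := mul_le_mul_of_nonneg_left (le_trans hr₀ε hr) hε.le
  have hrw : ∀ r : ℝ, 1 ≤ r →
      g (1/r) / r ^ (((k+1:ℕ)) : ℝ) = (1/r)^(k+1) * g (1/r) := by
    intro r hr
    have hr0 : (0:ℝ) < r := by linarith
    rw [Real.rpow_natCast, one_div, inv_pow]
    ring
  refine ⟨?_, ?_, ?_⟩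
  · -- MemOR part
    intro δ hδ
    obtain ⟨C, hC, D, hD, lam₀, hlam₀, hbd⟩ := hGOR δ hδ
    refine ⟨C * c2 / c1, by positivity, D * c1 / c2, by positivity, max lam₀ r₀,
      lt_of_lt_of_le hlam₀ (le_max_left _ _), ?_⟩
    intro t ht lam hlam
    simp only
    have hlamr₀ : r₀ ≤ lam := le_trans (le_max_right _ _) hlam
    have hlam0 : 0 < lam := lt_of_lt_of_le (by linarith) hlamr₀
    have ht0 : 0 < t := by linarith
    have hlamtr₀ : r₀ ≤ lam * t := le_trans hlamr₀ (le_mul_of_one_le_right hlam0.le ht)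
    obtain ⟨hlo, hhi⟩ := hbd t ht lam (le_trans (le_max_left _ _) hlam)
    simp only at hlo hhi
    obtain ⟨hA1, hA2⟩ := hsand (lam * t) hlamtr₀
    obtain ⟨hB1, hB2⟩ := hsand lam hlamr₀
    have hgA : 0 < g (1/(lam*t)) := hgposr _ hlamtr₀
    have hgB : 0 < g (1/lam) := hgposr _ hlamr₀
    have hGA : 0 < G (1/(lam*t)) := hGpos _ (by positivity)
    have hGB : 0 < G (1/lam) := hGpos _ (by positivity)
    have hP : (0:ℝ) < (1/lam)^(k+1) := by positivity
    have hT : (0:ℝ) < t^(k+1) := by positivity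
    have hid : (1/(lam*t):ℝ)^(k+1) = (1/lam)^(k+1) / t^(k+1) := by
      rw [← div_pow]
      congr 1
      field_simp
    rw [hid] at hA1 hA2
    have hexp : ∀ y : ℝ, t ^ (y + ((k+1:ℕ):ℝ)) = t ^ y * t ^ (k+1) := by
      intro y
      rw [Real.rpow_add ht0, Real.rpow_natCast]
    constructor
    · -- lower bound
      rw [le_div_iff₀ hgB, div_mul_eq_mul_div, div_mul_eq_mul_div, div_le_iff₀ hc2]
      have e1 : β + ((k+1:ℕ):ℝ) - δ = (β - δ) + ((k+1:ℕ):ℝ) := by ring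
      rw [e1, hexp]
      -- chain: D*c1*t^(β-δ)*t^(k+1)*P*gB ≤ c2*P*gA, then cancel P
      have step1 : D * t^(β-δ) * G (1/lam) ≤ G (1/(lam*t)) := (le_div_iff₀ hGB).mp hlo
      have step2 : D * t^(β-δ) * (c1 * ((1/lam)^(k+1) * g (1/lam))) ≤
          D * t^(β-δ) * G (1/lam) :=
        mul_le_mul_of_nonneg_left hB1 (by positivity)
      have step3 : D * t^(β-δ) * (c1 * ((1/lam)^(k+1) * g (1/lam))) ≤
          c2 * ((1/lam)^(k+1) / t^(k+1) * g (1/(lam*t))) :=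
        le_trans step2 (le_trans step1 hA2)
      have step4 : (1/lam)^(k+1) * (D * c1 * (t^(β-δ) * t^(k+1)) * g (1/lam)) ≤
          (1/lam)^(k+1) * (g (1/(lam*t)) * c2) := by
        have := mul_le_mul_of_nonneg_left step3 hT.le
        calc (1/lam)^(k+1) * (D * c1 * (t^(β-δ) * t^(k+1)) * g (1/lam))
            = t^(k+1) * (D * t^(β-δ) * (c1 * ((1/lam)^(k+1) * g (1/lam)))) := by ring
          _ ≤ t^(k+1) * (c2 * ((1/lam)^(k+1) / t^(k+1) * g (1/(lam*t)))) := this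
          _ = (1/lam)^(k+1) * (g (1/(lam*t)) * c2) := by
              field_simp
      exact le_of_mul_le_mul_left step4 hP
    · -- upper bound
      rw [div_le_iff₀ hgB, div_mul_eq_mul_div, div_mul_eq_mul_div, le_div_iff₀ hc1]
      have e1 : α + ((k+1:ℕ):ℝ) + δ = (α + δ) + ((k+1:ℕ):ℝ) := by ring
      rw [e1, hexp]
      have step1 : G (1/(lam*t)) ≤ C * t^(α+δ) * G (1/lam) := (div_le_iff₀ hGB).mp hhi
      have step2 : C * t^(α+δ) * G (1/lam) ≤
          C * t^(α+δ) * (c2 * ((1/lam)^(k+1) * g (1/lam))) :=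
        mul_le_mul_of_nonneg_left hB2 (by positivity)
      have step3 : c1 * ((1/lam)^(k+1) / t^(k+1) * g (1/(lam*t))) ≤
          C * t^(α+δ) * (c2 * ((1/lam)^(k+1) * g (1/lam))) :=
        le_trans hA1 (le_trans step1 step2)
      have step4 : (1/lam)^(k+1) * (g (1/(lam*t)) * c1) ≤
          (1/lam)^(k+1) * (C * c2 * (t^(α+δ) * t^(k+1)) * g (1/lam)) := by
        have := mul_le_mul_of_nonneg_left step3 hT.le
        calc (1/lam)^(k+1) * (g (1/(lam*t)) * c1)
            = t^(k+1) * (c1 * ((1/lam)^(k+1) / t^(k+1) * g (1/(lam*t)))) := by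
              field_simp
          _ ≤ t^(k+1) * (C * t^(α+δ) * (c2 * ((1/lam)^(k+1) * g (1/lam)))) := this
          _ = (1/lam)^(k+1) * (C * c2 * (t^(α+δ) * t^(k+1)) * g (1/lam)) := by ring
      exact le_of_mul_le_mul_left step4 hP
  · -- G = O(g/r^n)
    rw [Asymptotics.isBigO_iff]
    refine ⟨c2, ?_⟩
    filter_upwards [Filter.eventually_ge_atTop r₀] with r hr
    have hr1 : (1:ℝ) ≤ r := le_trans hr₀1 hr
    have hr0 : (0:ℝ) < r := by linarith
    have h := (hsand r hr).2
    have h1 : 0 < (1/r)^(k+1) * g (1/r) := mul_pos (by positivity) (hgposr r hr)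
    have h2 : 0 < G (1/r) := hGpos _ (by positivity)
    rw [Real.norm_eq_abs, Real.norm_eq_abs, hrw r hr1, abs_of_pos h2, abs_of_pos h1]
    exact h
  · -- g/r^n = O(G)
    rw [Asymptotics.isBigO_iff]
    refine ⟨1/c1, ?_⟩
    filter_upwards [Filter.eventually_ge_atTop r₀] with r hr
    have hr1 : (1:ℝ) ≤ r := le_trans hr₀1 hr
    have hr0 : (0:ℝ) < r := by linarith
    have h := (hsand r hr).1
    have h1 : 0 < (1/r)^(k+1) * g (1/r) := mul_pos (by positivity) (hgposr r hr)
    have h2 : 0 < G (1/r) := hGpos _ (by positivity)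
    rw [Real.norm_eq_abs, Real.norm_eq_abs, hrw r hr1, abs_of_pos h2, abs_of_pos h1]
    have h3 : (1/c1) * (c1 * ((1/r)^(k+1)*g (1/r))) = (1/r)^(k+1)*g (1/r) := by
      field_simp
    calc (1/r)^(k+1) * g (1/r) = (1/c1) * (c1 * ((1/r)^(k+1)*g (1/r))) := h3.symm
      _ ≤ 1/c1 * G (1/r) := mul_le_mul_of_nonneg_left h (by positivity)
end

section
/- Let a > 0 and r > 0, and let v(r) = {x ∈ ℝ³ : ‖x‖ < r} be the open ball of radius r in ℝ³. Then ∫_{v(r)} ∫_{v(r)} 2(1 − cos(a‖x−y‖))/‖x−y‖² dx dy = (4π²/a⁴) (2r⁴a⁴ − 2r²a² + 2ar sin(2ar) − 1 + cos(2ar)), where the (Lebesgue) integration is over x, y ∈ v(r) (the integrand being defined arbitrarily, e.g. as a², on the null set x = y). -/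
open MeasureTheory Filter Real Set

open scoped Classical

lemma vol_disc (s : ℝ) : volume {u : Fin 2 → ℝ | u 0 ^ 2 + u 1 ^ 2 < s} = ENNReal.ofReal (π * s) := by
  rcases le_or_gt s 0 with hs | hs
  · have : {u : Fin 2 → ℝ | u 0 ^ 2 + u 1 ^ 2 < s} = ∅ := by
      ext u; simp only [mem_setOf_eq, mem_empty_iff_false, iff_false, not_lt]
      nlinarith [sq_nonneg (u 0), sq_nonneg (u 1)]
    rw [this, measure_empty, Eq.comm, ENNReal.ofReal_eq_zero]
    nlinarith [pi_pos]
  · have hp := EuclideanSpace.volume_preserving_symm_measurableEquiv_toLp (Fin 2)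
    have hmeas : MeasurableSet {u : Fin 2 → ℝ | u 0 ^ 2 + u 1 ^ 2 < s} := by
      apply measurableSet_lt
      · exact ((measurable_pi_apply 0).pow_const 2).add ((measurable_pi_apply 1).pow_const 2)
      · exact measurable_const
    rw [← hp.measure_preimage hmeas.nullMeasurableSet]
    have hset : (MeasurableEquiv.toLp 2 (Fin 2 → ℝ)).symm ⁻¹' {u : Fin 2 → ℝ | u 0 ^ 2 + u 1 ^ 2 < s}
        = Metric.ball (0 : EuclideanSpace ℝ (Fin 2)) (Real.sqrt s) := by
      ext x
      simp only [mem_preimage, mem_setOf_eq, Metric.mem_ball, dist_zero_right,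
        EuclideanSpace.norm_eq]
      rw [show ((MeasurableEquiv.toLp 2 (Fin 2 → ℝ)).symm x : Fin 2 → ℝ) 0 = x 0 from rfl,
        show ((MeasurableEquiv.toLp 2 (Fin 2 → ℝ)).symm x : Fin 2 → ℝ) 1 = x 1 from rfl,
        Fin.sum_univ_two, Real.sqrt_lt_sqrt_iff (by positivity)]
      simp [sq_abs]
    rw [hset, EuclideanSpace.volume_ball]
    have : Real.Gamma ((Fintype.card (Fin 2)) / 2 + 1) = 1 := by
      norm_num [Real.Gamma_two]
    rw [this]
    simp only [Fintype.card_fin]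
    rw [← ENNReal.ofReal_pow (Real.sqrt_nonneg s), Real.sq_sqrt hs.le,
      ← ENNReal.ofReal_mul hs.le]
    congr 1
    rw [Real.sq_sqrt pi_nonneg]
    ring

lemma lint_piece (r d : ℝ) (hr : 0 < r) (hd0 : 0 ≤ d) (hd : d ≤ 2*r) :
    ∫⁻ t : ℝ, ENNReal.ofReal (π * (r^2 - max (t^2) ((t-d)^2)))
      = ENNReal.ofReal (π * (4*r^3/3 - r^2*d + d^3/12)) := by
  set ψ : ℝ → ℝ := fun t => max 0 (π * (r^2 - max (t^2) ((t-d)^2))) with hψ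
  have hψc : Continuous ψ := by
    apply continuous_const.max
    exact continuous_const.mul (continuous_const.sub (((continuous_id.pow 2)).max
      (((continuous_id.sub continuous_const)).pow 2)))
  have h1 : ∀ t : ℝ, ENNReal.ofReal (π * (r^2 - max (t^2) ((t-d)^2))) = ENNReal.ofReal (ψ t) := by
    intro t
    rcases le_total (π * (r^2 - max (t^2) ((t-d)^2))) 0 with h | h
    · rw [ENNReal.ofReal_eq_zero.2 h, Eq.comm, ENNReal.ofReal_eq_zero, hψ]
      simp [max_le_iff, h]
    · rw [hψ]; simp [max_eq_right h]
  simp only [h1]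
  have h2 : ∀ t ∉ Icc (d - r) r, ψ t = 0 := by
    intro t ht
    simp only [mem_Icc, not_and_or, not_le] at ht
    have : r^2 ≤ max (t^2) ((t-d)^2) := by
      rcases ht with h | h
      · exact le_trans (by nlinarith) (le_max_right _ _)
      · exact le_trans (by nlinarith) (le_max_left _ _)
    rw [hψ]
    exact max_eq_left (by nlinarith [pi_pos])
  have hind : (Icc (d-r) r).indicator (fun t => ENNReal.ofReal (ψ t))
      = fun t => ENNReal.ofReal (ψ t) := by
    apply Set.indicator_eq_self.2
    intro t ht
    simp only [Function.mem_support, ne_eq, ENNReal.ofReal_eq_zero, not_le] at ht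
    by_contra hc
    rw [h2 t hc] at ht; exact absurd le_rfl (not_le.2 ht)
  rw [show ∫⁻ t, ENNReal.ofReal (ψ t) = ∫⁻ t, (Icc (d-r) r).indicator
      (fun t => ENNReal.ofReal (ψ t)) t from by simp only [hind],
    lintegral_indicator measurableSet_Icc _,
    ← ofReal_integral_eq_lintegral_ofReal
      ((hψc.continuousOn).integrableOn_compact isCompact_Icc)
      (Filter.Eventually.of_forall (fun t => le_max_left 0 _))]
  congr 1
  have hle : d - r ≤ r := by linarith
  have hle2 : d - r ≤ d/2 := by linarith
  have hle3 : d/2 ≤ r := by linarith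
  rw [integral_Icc_eq_integral_Ioc, ← intervalIntegral.integral_of_le hle,
    ← intervalIntegral.integral_add_adjacent_intervals
      (hψc.intervalIntegrable (d-r) (d/2)) (hψc.intervalIntegrable (d/2) r)]
  have hD : ∀ t : ℝ, HasDerivAt (fun t : ℝ => r^2*t - (t-d)^3/3) (r^2 - (t-d)^2) t := by
    intro t
    have ha := (hasDerivAt_id t).const_mul (r^2)
    have hb := (((hasDerivAt_id t).sub_const d).pow 3).div_const 3
    exact (ha.sub hb).congr_deriv (by simp only [id]; ring)
  have hD2 : ∀ t : ℝ, HasDerivAt (fun t : ℝ => r^2*t - t^3/3) (r^2 - t^2) t := by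
    intro t
    have ha := (hasDerivAt_id t).const_mul (r^2)
    have hb := ((hasDerivAt_id t).pow 3).div_const 3
    exact (ha.sub hb).congr_deriv (by simp only [id]; ring)
  have hc1 : Continuous fun t : ℝ => π * (r^2 - (t-d)^2) :=
    continuous_const.mul (continuous_const.sub ((continuous_id.sub continuous_const).pow 2))
  have hc2 : Continuous fun t : ℝ => π * (r^2 - t^2) :=
    continuous_const.mul (continuous_const.sub (continuous_id.pow 2))
  have e1 : ∫ t in (d-r)..(d/2), ψ t = ∫ t in (d-r)..(d/2), π * (r^2 - (t-d)^2) := by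
    apply intervalIntegral.integral_congr
    intro t ht
    rw [Set.uIcc_of_le hle2, mem_Icc] at ht
    show 0 ⊔ π * (r ^ 2 - (t ^ 2 ⊔ (t - d) ^ 2)) = π * (r ^ 2 - (t-d) ^ 2)
    rw [max_eq_right (show t^2 ≤ (t-d)^2 by nlinarith)]
    exact max_eq_right (mul_nonneg pi_pos.le (by nlinarith))
  have e2 : ∫ t in (d/2)..r, ψ t = ∫ t in (d/2)..r, π * (r^2 - t^2) := by
    apply intervalIntegral.integral_congr
    intro t ht
    rw [Set.uIcc_of_le hle3, mem_Icc] at ht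
    show 0 ⊔ π * (r ^ 2 - (t ^ 2 ⊔ (t - d) ^ 2)) = π * (r ^ 2 - t ^ 2)
    rw [max_eq_left (show (t-d)^2 ≤ t^2 by nlinarith)]
    exact max_eq_right (mul_nonneg pi_pos.le (by nlinarith))
  rw [e1, e2,
    intervalIntegral.integral_eq_sub_of_hasDerivAt
      (f := fun t => π * (r^2*t - (t-d)^3/3))
      (fun t _ => ((hD t).const_mul π)) (hc1.intervalIntegrable _ _),
    intervalIntegral.integral_eq_sub_of_hasDerivAt
      (f := fun t => π * (r^2*t - t^3/3))
      (fun t _ => ((hD2 t).const_mul π)) (hc2.intervalIntegrable _ _)]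
  ring

lemma vol_axis (r d : ℝ) (hr : 0 < r) (hd0 : 0 ≤ d) (hd : d ≤ 2*r) :
    volume {p : ℝ × (Fin 2 → ℝ) | p.1^2 + (p.2 0^2 + p.2 1^2) < r^2
        ∧ (p.1 - d)^2 + (p.2 0^2 + p.2 1^2) < r^2}
      = ENNReal.ofReal (π * (4*r^3/3 - r^2*d + d^3/12)) := by
  have hQ : Measurable fun u : Fin 2 → ℝ => u 0 ^ 2 + u 1 ^ 2 :=
    ((measurable_pi_apply 0).pow_const 2).add ((measurable_pi_apply 1).pow_const 2)
  have hmeas : MeasurableSet {p : ℝ × (Fin 2 → ℝ) | p.1^2 + (p.2 0^2 + p.2 1^2) < r^2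
      ∧ (p.1 - d)^2 + (p.2 0^2 + p.2 1^2) < r^2} := by
    apply MeasurableSet.inter
    · exact measurableSet_lt (((measurable_fst.pow_const 2)).add (hQ.comp measurable_snd))
        measurable_const
    · exact measurableSet_lt ((((measurable_fst.sub measurable_const).pow_const 2)).add
        (hQ.comp measurable_snd)) measurable_const
  rw [Measure.volume_eq_prod, Measure.prod_apply hmeas]
  have hsec : ∀ t : ℝ, volume (Prod.mk t ⁻¹' {p : ℝ × (Fin 2 → ℝ) |
      p.1^2 + (p.2 0^2 + p.2 1^2) < r^2 ∧ (p.1 - d)^2 + (p.2 0^2 + p.2 1^2) < r^2})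
      = ENNReal.ofReal (π * (r^2 - max (t^2) ((t-d)^2))) := by
    intro t
    have hset : Prod.mk t ⁻¹' {p : ℝ × (Fin 2 → ℝ) |
        p.1^2 + (p.2 0^2 + p.2 1^2) < r^2 ∧ (p.1 - d)^2 + (p.2 0^2 + p.2 1^2) < r^2}
        = {u : Fin 2 → ℝ | u 0 ^ 2 + u 1 ^ 2 < r^2 - max (t^2) ((t-d)^2)} := by
      ext u
      simp only [mem_preimage, mem_setOf_eq, lt_sub_iff_add_lt, add_comm _ (u 0 ^2 + u 1 ^2),
        ← max_add_add_left, max_lt_iff]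
    rw [hset, vol_disc]
  simp only [hsec]
  exact lint_piece r d hr hd0 hd

lemma vol_inter (r : ℝ) (hr : 0 < r) (z : EuclideanSpace ℝ (Fin 3)) (hz : ‖z‖ ≤ 2*r) :
    volume (Metric.ball (0 : EuclideanSpace ℝ (Fin 3)) r ∩ Metric.ball z r)
      = ENNReal.ofReal (π * (4*r^3/3 - r^2*‖z‖ + ‖z‖^3/12)) := by
  set d : ℝ := ‖z‖ with hd
  set z₀ : EuclideanSpace ℝ (Fin 3) := d • (EuclideanSpace.single (0 : Fin 3) (1:ℝ)) with hz₀
  have hz₀n : ‖z₀‖ = d := by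
    rw [hz₀, norm_smul, EuclideanSpace.norm_single, norm_one, mul_one, Real.norm_eq_abs,
      abs_of_nonneg (norm_nonneg z)]
  have hz₀0 : z₀ 0 = d := by simp [hz₀]
  have hz₀1 : z₀ 1 = 0 := by simp [hz₀]
  have hz₀2 : z₀ 2 = 0 := by simp [hz₀]
  -- rotate z to z₀
  have hrot : volume (Metric.ball (0 : EuclideanSpace ℝ (Fin 3)) r ∩ Metric.ball z r)
      = volume (Metric.ball (0 : EuclideanSpace ℝ (Fin 3)) r ∩ Metric.ball z₀ r) := by
    set f := (ℝ ∙ (z₀ - z))ᗮ.reflection with hf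
    have hfz : f z₀ = z := Submodule.reflection_sub (by rw [hz₀n])
    have hmp : MeasurePreserving f volume volume := f.measurePreserving
    rw [← hmp.measure_preimage
      ((measurableSet_ball.inter measurableSet_ball).nullMeasurableSet)]
    congr 1
    ext x
    simp only [mem_preimage, mem_inter_iff, Metric.mem_ball, dist_zero_right, dist_eq_norm, sub_zero]
    rw [f.norm_map, ← hfz, ← map_sub, f.norm_map]
  rw [hrot]
  -- move to pi space
  have hp3 := EuclideanSpace.volume_preserving_symm_measurableEquiv_toLp (Fin 3)
  set T : Set (Fin 3 → ℝ) := {f | (f 0^2 + f 1^2 + f 2^2 < r^2)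
      ∧ ((f 0 - d)^2 + f 1^2 + f 2^2 < r^2)} with hT
  have hTmeas : MeasurableSet T := by
    apply MeasurableSet.inter
    · exact measurableSet_lt ((((measurable_pi_apply 0).pow_const 2).add
        ((measurable_pi_apply 1).pow_const 2)).add ((measurable_pi_apply 2).pow_const 2))
        measurable_const
    · exact measurableSet_lt (((((measurable_pi_apply 0).sub measurable_const).pow_const 2).add
        ((measurable_pi_apply 1).pow_const 2)).add ((measurable_pi_apply 2).pow_const 2))
        measurable_const
  have hpre : (MeasurableEquiv.toLp 2 (Fin 3 → ℝ)).symm ⁻¹' T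
      = Metric.ball (0 : EuclideanSpace ℝ (Fin 3)) r ∩ Metric.ball z₀ r := by
    ext x
    have hco : ∀ i, ((MeasurableEquiv.toLp 2 (Fin 3 → ℝ)).symm x : Fin 3 → ℝ) i = x i :=
      fun _ => rfl
    simp only [mem_preimage, hT, mem_setOf_eq, mem_inter_iff, Metric.mem_ball,
      dist_zero_right, dist_eq_norm, hco]
    rw [EuclideanSpace.norm_eq, EuclideanSpace.norm_eq]
    simp only [Real.norm_eq_abs, sq_abs, Fin.sum_univ_three, Real.sqrt_lt' hr]
    have : ∀ i, (x - z₀) i = x i - z₀ i := fun _ => rfl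
    rw [this 0, this 1, this 2, hz₀0, hz₀1, hz₀2]
    simp only [sub_zero]
  rw [← hpre] at *
  rw [hp3.measure_preimage hTmeas.nullMeasurableSet]
  -- split off first coordinate
  have hp2 := MeasureTheory.volume_preserving_piFinSuccAbove (fun _ : Fin 3 => ℝ) 0
  set P : Set (ℝ × (Fin 2 → ℝ)) := {p | p.1^2 + (p.2 0^2 + p.2 1^2) < r^2
      ∧ (p.1 - d)^2 + (p.2 0^2 + p.2 1^2) < r^2} with hP
  have hpre2 : (MeasurableEquiv.piFinSuccAbove (fun _ : Fin 3 => ℝ) 0) ⁻¹' P = T := by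
    ext f
    have h0 : ((MeasurableEquiv.piFinSuccAbove (fun _ : Fin 3 => ℝ) 0) f).1 = f 0 := rfl
    have h1 : ((MeasurableEquiv.piFinSuccAbove (fun _ : Fin 3 => ℝ) 0) f).2 0 = f 1 := rfl
    have h2 : ((MeasurableEquiv.piFinSuccAbove (fun _ : Fin 3 => ℝ) 0) f).2 1 = f 2 := rfl
    simp only [mem_preimage, hP, hT, mem_setOf_eq, h0, h1, h2]
    constructor <;> rintro ⟨u, v⟩ <;> exact ⟨by linarith, by linarith⟩
  have hQ : Measurable fun u : Fin 2 → ℝ => u 0 ^ 2 + u 1 ^ 2 :=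
    ((measurable_pi_apply 0).pow_const 2).add ((measurable_pi_apply 1).pow_const 2)
  have hPmeas : MeasurableSet P := by
    apply MeasurableSet.inter
    · exact measurableSet_lt ((measurable_fst.pow_const 2).add (hQ.comp measurable_snd))
        measurable_const
    · exact measurableSet_lt (((measurable_fst.sub measurable_const).pow_const 2).add
        (hQ.comp measurable_snd)) measurable_const
  rw [← hpre2, hp2.measure_preimage hPmeas.nullMeasurableSet]
  exact vol_axis r d hr (norm_nonneg z) hz

lemma ftc_piece (a r : ℝ) (ha : 0 < a) (hr : 0 < r) :
    ∫ y in (0:ℝ)..(2*r), 2*(1 - Real.cos (a*y)) * (π * (4*r^3/3 - r^2*y + y^3/12))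
      = π/a^4 * (2*r^4*a^4 - 2*r^2*a^2 + 2*a*r*Real.sin (2*a*r) - 1 + Real.cos (2*a*r)) := by
  set F : ℝ → ℝ := fun y => 2*π*( 4*r^3/3*y - r^2*y^2/2 + y^4/48
      - 4*r^3/3 * (Real.sin (a*y)/a)
      + r^2 * (y * Real.sin (a*y)/a + Real.cos (a*y)/a^2)
      - 1/12 * (y^3*Real.sin (a*y)/a + 3*y^2*Real.cos (a*y)/a^2
          - 6*y*Real.sin (a*y)/a^3 - 6*Real.cos (a*y)/a^4) ) with hF
  have hcont : Continuous fun y => 2*(1 - Real.cos (a*y)) * (π * (4*r^3/3 - r^2*y + y^3/12)) := by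
    fun_prop
  have hderiv : ∀ y : ℝ, HasDerivAt F
      (2*(1 - Real.cos (a*y)) * (π * (4*r^3/3 - r^2*y + y^3/12))) y := by
    intro y
    have hay : HasDerivAt (fun y : ℝ => a * y) a y := by
      simpa using (hasDerivAt_id y).const_mul a
    have hsin : HasDerivAt (fun y => Real.sin (a*y)) (Real.cos (a*y) * a) y := hay.sin
    have hcos : HasDerivAt (fun y => Real.cos (a*y)) (-Real.sin (a*y) * a) y := hay.cos
    have hid : HasDerivAt (fun y : ℝ => y) 1 y := hasDerivAt_id' y
    have h1 : HasDerivAt (fun y : ℝ => 4*r^3/3*y) (4*r^3/3 * 1) y := hid.const_mul (4*r^3/3)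
    have h2 := ((hasDerivAt_pow 2 y).const_mul (r^2)).div_const 2
    have h3 := (hasDerivAt_pow 4 y).div_const 48
    have h4 := (hsin.div_const a).const_mul (4*r^3/3)
    have h5 := (((hid.mul hsin).div_const a).add (hcos.div_const (a^2))).const_mul (r^2)
    have t1 := ((hasDerivAt_pow 3 y).mul hsin).div_const a
    have t2 := (((hasDerivAt_pow 2 y).const_mul 3).mul hcos).div_const (a^2)
    have t3 := ((hid.const_mul 6).mul hsin).div_const (a^3)
    have t4 := (hcos.const_mul 6).div_const (a^4)
    have h6 := (((t1.add t2).sub t3).sub t4).const_mul (1/12)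
    have hbig := (((((h1.sub h2).add h3).sub h4).add h5).sub h6).const_mul (2*π)
    rw [hF]
    exact hbig.congr_deriv (by field_simp; ring)
  rw [intervalIntegral.integral_eq_sub_of_hasDerivAt (fun y _ => hderiv y)
    (hcont.intervalIntegrable _ _)]
  rw [hF]
  simp only [mul_zero, Real.sin_zero, Real.cos_zero]
  have h2ar : a * (2*r) = 2*a*r := by ring
  rw [h2ar]
  field_simp
  ring

lemma vol_unit_ball3 :
    (volume (Metric.ball (0 : EuclideanSpace ℝ (Fin 3)) 1)).toReal = 4*π/3 := by
  rw [EuclideanSpace.volume_ball]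
  have hG : Real.Gamma ((Fintype.card (Fin 3)) / 2 + 1) = 3/4 * Real.sqrt π := by
    have h1 : ((Fintype.card (Fin 3)) : ℝ)/2 + 1 = (1/2 + 1) + 1 := by
      simp [Fintype.card_fin]; norm_num
    rw [h1, Real.Gamma_add_one (by norm_num), Real.Gamma_add_one (by norm_num),
      Real.Gamma_one_half_eq]
    ring
  rw [hG]
  have hsp : Real.sqrt π ≠ 0 := (Real.sqrt_pos.2 pi_pos).ne'
  have hval : Real.sqrt π ^ (Fintype.card (Fin 3)) / (3/4 * Real.sqrt π) = 4*π/3 := by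
    simp only [Fintype.card_fin]
    rw [pow_succ, Real.sq_sqrt pi_nonneg]
    field_simp
  rw [hval, ENNReal.ofReal_one, one_pow, one_mul, ENNReal.toReal_ofReal (by positivity)]

set_option maxHeartbeats 1000000 in
theorem ball_variance_example (a r : ℝ) (ha : 0 < a) (hr : 0 < r) :
    (∫ x in Metric.ball (0 : EuclideanSpace ℝ (Fin 3)) r,
        ∫ y in Metric.ball (0 : EuclideanSpace ℝ (Fin 3)) r,
          if x = y then a ^ 2 else 2 * (1 - Real.cos (a * ‖x - y‖)) / ‖x - y‖ ^ 2) =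
      4 * π ^ 2 / a ^ 4 *
        (2 * r ^ 4 * a ^ 4 - 2 * r ^ 2 * a ^ 2 + 2 * a * r * Real.sin (2 * a * r) - 1 +
          Real.cos (2 * a * r)) := by
  set E := EuclideanSpace ℝ (Fin 3)
  set B : Set E := Metric.ball (0 : E) r with hB
  set g : E → ℝ := fun z => if z = 0 then a ^ 2 else 2 * (1 - Real.cos (a * ‖z‖)) / ‖z‖ ^ 2
    with hg
  have hint : ∀ x y : E,
      (if x = y then a ^ 2 else 2 * (1 - Real.cos (a * ‖x - y‖)) / ‖x - y‖ ^ 2) = g (x - y) := by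
    intro x y
    by_cases h : x = y <;> simp [hg, sub_eq_zero, h]
  simp only [hint]
  -- basic properties of g
  have hgm : Measurable g := by
    apply Measurable.ite (MeasurableSet.singleton (0 : E)) measurable_const
    apply Measurable.div
    · exact (Continuous.measurable (by fun_prop))
    · exact (continuous_norm.pow 2).measurable
  have hg0 : ∀ z, 0 ≤ g z := by
    intro z
    by_cases h : z = (0 : E)
    · simp [hg, h]; positivity
    · simp only [hg, if_neg h]
      apply div_nonneg _ (sq_nonneg _)
      nlinarith [Real.cos_le_one (a * ‖z‖)]
  have hga : ∀ z, g z ≤ a ^ 2 := by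
    intro z
    by_cases h : z = (0 : E)
    · simp [hg, h]
    · simp only [hg, if_neg h]
      have hz : (0:ℝ) < ‖z‖ := norm_pos_iff.2 h
      rw [div_le_iff₀ (by positivity)]
      have := Real.one_sub_sq_div_two_le_cos (x := a * ‖z‖)
      nlinarith
  have hmB : MeasurableSet B := measurableSet_ball
  -- the inner lintegral as a function of x
  set Φ : E → ENNReal := fun x => ∫⁻ y in B, ENNReal.ofReal (g (x - y)) with hΦ
  have hΦm : Measurable Φ := by
    have hunc : Measurable (fun p : E × E => ENNReal.ofReal (g (p.1 - p.2))) :=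
      ENNReal.measurable_ofReal.comp (hgm.comp (measurable_fst.sub measurable_snd))
    exact hunc.lintegral_prod_right'
  have hΦne : ∀ x, Φ x ≠ ⊤ := by
    intro x
    have hb : Φ x ≤ ENNReal.ofReal (a ^ 2) * volume B := by
      calc Φ x ≤ ∫⁻ _ in B, ENNReal.ofReal (a ^ 2) :=
            lintegral_mono fun y => ENNReal.ofReal_le_ofReal (hga _)
        _ = ENNReal.ofReal (a ^ 2) * volume B := by
            rw [setLIntegral_const]
    exact (lt_of_le_of_lt hb
      (ENNReal.mul_lt_top ENNReal.ofReal_lt_top measure_ball_lt_top)).ne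
  -- step 1 : Bochner to lintegral
  have step1 : (∫ x in B, ∫ y in B, g (x - y)) = (∫⁻ x in B, Φ x).toReal := by
    have inner : ∀ x : E, ∫ y in B, g (x - y) = (Φ x).toReal := by
      intro x
      rw [hΦ]
      exact integral_eq_lintegral_of_nonneg_ae (Eventually.of_forall fun y => hg0 _)
        ((hgm.comp (measurable_const.sub measurable_id)).aestronglyMeasurable)
    simp only [inner]
    rw [integral_eq_lintegral_of_nonneg_ae
      (Eventually.of_forall fun x => ENNReal.toReal_nonneg)
      (hΦm.ennreal_toReal.aestronglyMeasurable)]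
    congr 1
    exact lintegral_congr fun x => ENNReal.ofReal_toReal (hΦne x)
  -- step 2 : translation invariance
  have step2 : ∀ x : E, Φ x = ∫⁻ w, ENNReal.ofReal (g w) * (Metric.ball x r).indicator 1 w := by
    intro x
    have hmp : MeasurePreserving (fun w : E => x - w) volume volume :=
      Measure.measurePreserving_sub_left volume x
    have hkm : Measurable fun y : E => B.indicator (fun y' => ENNReal.ofReal (g (x - y'))) y :=
      (ENNReal.measurable_ofReal.comp (hgm.comp (measurable_const.sub measurable_id))).indicator
        hmB
    rw [hΦ]
    calc (∫⁻ y in B, ENNReal.ofReal (g (x - y)))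
        = ∫⁻ y, B.indicator (fun y' => ENNReal.ofReal (g (x - y'))) y := by
          rw [lintegral_indicator hmB]
      _ = ∫⁻ w, B.indicator (fun y' => ENNReal.ofReal (g (x - y'))) (x - w) := by
          rw [hmp.lintegral_comp hkm]
      _ = ∫⁻ w, ENNReal.ofReal (g w) * (Metric.ball x r).indicator 1 w := by
          apply lintegral_congr
          intro w
          by_cases hw : x - w ∈ B
          · have hw' : w ∈ Metric.ball x r := by
              rw [Metric.mem_ball, dist_eq_norm, ← norm_neg, neg_sub]
              rw [hB, Metric.mem_ball, dist_zero_right] at hw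
              exact hw
            rw [indicator_of_mem hw, indicator_of_mem hw', sub_sub_cancel, Pi.one_apply, mul_one]
          · have hw' : w ∉ Metric.ball x r := by
              intro hc
              apply hw
              rw [hB, Metric.mem_ball, dist_zero_right]
              rw [Metric.mem_ball, dist_eq_norm, ← norm_neg, neg_sub] at hc
              exact hc
            rw [indicator_of_notMem hw, indicator_of_notMem hw', mul_zero]
  -- step 3 : swap integrals
  have step3 : (∫⁻ x in B, Φ x) = ∫⁻ w, ENNReal.ofReal (g w) * volume (B ∩ Metric.ball w r) := by
    have hswap := lintegral_lintegral_swap (μ := volume.restrict B) (ν := (volume : Measure E))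
      (f := fun x w => ENNReal.ofReal (g w) * (Metric.ball x r).indicator 1 w) ?_
    · calc (∫⁻ x in B, Φ x)
          = ∫⁻ x in B, ∫⁻ w, ENNReal.ofReal (g w) * (Metric.ball x r).indicator 1 w := by
            exact lintegral_congr fun x => step2 x
        _ = ∫⁻ w, ∫⁻ x in B, ENNReal.ofReal (g w) * (Metric.ball x r).indicator 1 w := hswap
        _ = ∫⁻ w, ENNReal.ofReal (g w) * volume (B ∩ Metric.ball w r) := by
            apply lintegral_congr
            intro w
            have hsym : ∀ x : E, (Metric.ball x r).indicator (1 : E → ENNReal) w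
                = (Metric.ball w r).indicator (1 : E → ENNReal) x := by
              intro x
              by_cases hx : w ∈ Metric.ball x r
              · have : x ∈ Metric.ball w r := by
                  rw [Metric.mem_ball, dist_comm]; exact hx
                rw [indicator_of_mem hx, indicator_of_mem this]; rfl
              · have : x ∉ Metric.ball w r := by
                  rw [Metric.mem_ball, dist_comm]; exact hx
                rw [indicator_of_notMem hx, indicator_of_notMem this]
            calc (∫⁻ x in B, ENNReal.ofReal (g w) * (Metric.ball x r).indicator 1 w)
                = ∫⁻ x in B, ENNReal.ofReal (g w) * (Metric.ball w r).indicator 1 x := by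
                  exact lintegral_congr fun x => by rw [hsym x]
              _ = ENNReal.ofReal (g w) * ∫⁻ x in B, (Metric.ball w r).indicator 1 x :=
                  lintegral_const_mul _ (measurable_one.indicator measurableSet_ball)
              _ = ENNReal.ofReal (g w) * volume (B ∩ Metric.ball w r) := by
                  rw [lintegral_indicator_one measurableSet_ball,
                    Measure.restrict_apply measurableSet_ball, inter_comm]
    · apply Measurable.aemeasurable
      have heq : (Function.uncurry fun (x w : E) =>
          ENNReal.ofReal (g w) * (Metric.ball x r).indicator 1 w)
          = fun p : E × E => ENNReal.ofReal (g p.2)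
              * ({q : E × E | dist q.2 q.1 < r}.indicator 1 p) := by
        funext p
        rcases p with ⟨x, w⟩
        by_cases hx : dist w x < r
        · simp [Function.uncurry, Set.indicator, Metric.mem_ball, hx]
        · simp [Function.uncurry, Set.indicator, Metric.mem_ball, hx]
      rw [heq]
      apply Measurable.mul
      · exact ENNReal.measurable_ofReal.comp (hgm.comp measurable_snd)
      · exact measurable_one.indicator
          ((isOpen_lt (continuous_dist.comp (continuous_snd.prodMk continuous_fst))
            continuous_const).measurableSet)
  -- step 4 : volume of the intersection of balls
  set W : ℝ → ℝ := fun s => if s ≤ 2*r then π * (4*r^3/3 - r^2*s + s^3/12) else 0 with hWdef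
  have hWvol : ∀ w : E, volume (B ∩ Metric.ball w r) = ENNReal.ofReal (W ‖w‖) := by
    intro w
    by_cases h : ‖w‖ ≤ 2*r
    · simp only [hWdef, if_pos h]
      exact vol_inter r hr w h
    · simp only [hWdef, if_neg h]
      have hempty : B ∩ Metric.ball w r = ∅ := by
        rw [eq_empty_iff_forall_notMem]
        rintro x ⟨h1, h2⟩
        rw [hB, Metric.mem_ball, dist_zero_right] at h1
        rw [Metric.mem_ball, dist_eq_norm] at h2
        apply h
        calc ‖w‖ = ‖x - (x - w)‖ := by rw [sub_sub_cancel]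
          _ ≤ ‖x‖ + ‖x - w‖ := norm_sub_le _ _
          _ ≤ 2*r := by linarith
      rw [hempty, measure_empty, ENNReal.ofReal_zero]
  set h1d : ℝ → ℝ := fun s => (if s = 0 then a^2 else 2*(1 - Real.cos (a*s))/s^2) * W s
    with hh1d
  have step5 : (∫⁻ w : E, ENNReal.ofReal (g w) * volume (B ∩ Metric.ball w r))
      = ∫⁻ w : E, ENNReal.ofReal (h1d ‖w‖) := by
    apply lintegral_congr
    intro w
    rw [hWvol w, ← ENNReal.ofReal_mul (hg0 w)]
    congr 1
    by_cases hw : w = (0 : E)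
    · simp [hg, hh1d, hw]
    · have hn : ‖w‖ ≠ 0 := by
        exact norm_ne_zero_iff.2 hw
      simp only [hg, hh1d, if_neg hw, if_neg hn]
  have hWm : Measurable W := by
    apply Measurable.ite (measurableSet_le measurable_id measurable_const)
    · exact Continuous.measurable (by fun_prop)
    · exact measurable_const
  have hfm : Measurable h1d := by
    apply Measurable.mul _ hWm
    apply Measurable.ite (MeasurableSet.singleton (0:ℝ)) measurable_const
    exact (Continuous.measurable (by fun_prop)).div ((continuous_pow 2).measurable)
  have hWnn : ∀ s : ℝ, 0 ≤ s → 0 ≤ W s := by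
    intro s hs
    by_cases h : s ≤ 2*r
    · simp only [hWdef, if_pos h]
      have key : 0 ≤ 4*r^3/3 - r^2*s + s^3/12 := by
        nlinarith [mul_nonneg (sq_nonneg (2*r - s)) (show (0:ℝ) ≤ 4*r + s by linarith)]
      exact mul_nonneg pi_pos.le key
    · simp only [hWdef, if_neg h]; exact le_rfl
  have hfnn : ∀ s : ℝ, 0 ≤ s → 0 ≤ h1d s := by
    intro s hs
    rw [hh1d]
    apply mul_nonneg _ (hWnn s hs)
    by_cases h : s = 0
    · simp [if_pos h]; positivity
    · simp only [if_neg h]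
      apply div_nonneg _ (sq_nonneg _)
      nlinarith [Real.cos_le_one (a * s)]
  have step6 : (∫⁻ w : E, ENNReal.ofReal (h1d ‖w‖)).toReal = ∫ w : E, h1d ‖w‖ :=
    (integral_eq_lintegral_of_nonneg_ae
      (Eventually.of_forall fun w => hfnn _ (norm_nonneg w))
      ((hfm.comp measurable_norm).aestronglyMeasurable)).symm
  rw [step1, step3, step5, step6]
  have hdim : Module.finrank ℝ E = 3 := finrank_euclideanSpace_fin
  rw [MeasureTheory.integral_fun_norm_addHaar (volume : Measure E) h1d, hdim]
  -- volume of the unit ball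
  have hvol1 : volume.real (Metric.ball (0:E) 1) = 4*π/3 := vol_unit_ball3
  rw [hvol1]
  -- the radial integral
  have hIoi : ∫ y in Ioi (0:ℝ), y ^ (3-1) • h1d y
      = π/a^4 * (2*r^4*a^4 - 2*r^2*a^2 + 2*a*r*Real.sin (2*a*r) - 1 + Real.cos (2*a*r)) := by
    have hcongr : ∀ y ∈ Ioi (0:ℝ), y ^ (3-1) • h1d y
        = (fun y => if y ≤ 2*r then 2*(1 - Real.cos (a*y)) * (π * (4*r^3/3 - r^2*y + y^3/12))
            else 0) y := by
      intro y hy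
      have hy0 : y ≠ 0 := (mem_Ioi.1 hy).ne'
      rw [hh1d, hWdef]
      simp only [smul_eq_mul, if_neg hy0]
      by_cases h : y ≤ 2*r
      · rw [if_pos h, if_pos h]
        field_simp
      · rw [if_neg h, if_neg h, mul_zero, mul_zero]
    rw [setIntegral_congr_fun measurableSet_Ioi hcongr]
    have hsplit : Ioc (0:ℝ) (2*r) ∪ Ioi (2*r) = Ioi (0:ℝ) :=
      Ioc_union_Ioi_eq_Ioi (by linarith)
    have hcp : Continuous fun y : ℝ =>
        2*(1 - Real.cos (a*y)) * (π * (4*r^3/3 - r^2*y + y^3/12)) := by fun_prop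
    have hint1 : IntegrableOn (fun y => if y ≤ 2*r then
        2*(1 - Real.cos (a*y)) * (π * (4*r^3/3 - r^2*y + y^3/12)) else 0) (Ioc 0 (2*r)) := by
      apply IntegrableOn.congr_fun (hcp.integrableOn_Ioc) _ measurableSet_Ioc
      intro y hy
      simp only [if_pos hy.2]
    have hint2 : IntegrableOn (fun y => if y ≤ 2*r then
        2*(1 - Real.cos (a*y)) * (π * (4*r^3/3 - r^2*y + y^3/12)) else 0) (Ioi (2*r)) := by
      apply IntegrableOn.congr_fun (integrableOn_zero) _ measurableSet_Ioi
      intro y hy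
      simp only [if_neg (not_le.2 (show 2*r < y from hy))]
    rw [← hsplit, setIntegral_union (Ioc_disjoint_Ioi le_rfl) measurableSet_Ioi hint1 hint2]
    have hz2 : ∫ y in Ioi (2*r), (fun y => if y ≤ 2*r then
        2*(1 - Real.cos (a*y)) * (π * (4*r^3/3 - r^2*y + y^3/12)) else 0) y = 0 := by
      rw [setIntegral_congr_fun measurableSet_Ioi
        (fun y (hy : y ∈ Ioi (2*r)) => if_neg (not_le.2 hy))]
      simp
    have hz1 : ∫ y in Ioc (0:ℝ) (2*r), (fun y => if y ≤ 2*r then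
        2*(1 - Real.cos (a*y)) * (π * (4*r^3/3 - r^2*y + y^3/12)) else 0) y
        = π/a^4 * (2*r^4*a^4 - 2*r^2*a^2 + 2*a*r*Real.sin (2*a*r) - 1 + Real.cos (2*a*r)) := by
      rw [setIntegral_congr_fun measurableSet_Ioc
        (fun y (hy : y ∈ Ioc (0:ℝ) (2*r)) => if_pos hy.2),
        ← intervalIntegral.integral_of_le (by linarith : (0:ℝ) ≤ 2*r)]
      exact ftc_piece a r ha hr
    rw [hz1, hz2, add_zero]
  rw [hIoi]
  rw [nsmul_eq_mul, smul_eq_mul]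
  field_simp
  ring
end
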